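/- With the setup of the LSPIA iteration C^{(q)} = C^{(q-1)} + D^{-1} A^T (X - A C^{(q-1)}), if all eigenvalues of D^{-1} A^T A lie in (0,1], then the iteration converges, and its limit C* satisfies the normal equations A^T A C* = A^T X; i.e., C* is a least-squares solution of A C = X. -/

import Mathlib

open Matrix Filter
open scoped NNReal ENNReal

section Aux
variable {N : ℕ}

attribute [local instance] Matrix.linftyOpNormedRing Matrix.linftyOpNormedAlgebra
  Matrix.linftyOpNormedSpace

noncomputable local instance : CompleteSpace (Matrix (Fin N) (Fin N) ℂ) :=
  FiniteDimensional.complete ℂ _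

lemma lspia_aux_entry_tendsto (T : Matrix (Fin N) (Fin N) ℝ)
    (hspec : ∀ z ∈ spectrum ℂ (T.map (algebraMap ℝ ℂ)), ‖z‖₊ < 1) (i j : Fin N) :
    Tendsto (fun q : ℕ => (T ^ q) i j) atTop (nhds 0) := by
  set Tc := T.map (algebraMap ℝ ℂ) with hTc
  -- spectral radius < 1
  have hρ : spectralRadius ℂ Tc < 1 := by
    obtain ⟨r, hr1, hr⟩ : ∃ r : ℝ≥0, r < 1 ∧ ∀ z ∈ spectrum ℂ Tc, ‖z‖₊ ≤ r := by
      rcases (spectrum ℂ Tc).eq_empty_or_nonempty with h | h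
      · exact ⟨0, by norm_num, fun z hz => by simp [h] at hz⟩
      · obtain ⟨z0, hz0, hmax⟩ := Set.exists_max_image _ (fun z => ‖z‖₊)
          (Matrix.finite_spectrum Tc) h
        exact ⟨‖z0‖₊, hspec z0 hz0, hmax⟩
    calc spectralRadius ℂ Tc ≤ (r : ENNReal) := by
          refine iSup₂_le fun z hz => ?_
          exact_mod_cast hr z hz
      _ < 1 := by exact_mod_cast hr1
  obtain ⟨s, hs1, hs2⟩ := ENNReal.lt_iff_exists_nnreal_btwn.mp hρ
  have hs1' : (s : ℝ) < 1 := by exact_mod_cast hs2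
  have hgel := spectrum.pow_nnnorm_pow_one_div_tendsto_nhds_spectralRadius Tc
  have hev : ∀ᶠ n : ℕ in atTop, ((‖Tc ^ n‖₊ : ENNReal) ^ (1 / (n : ℝ))) < (s : ENNReal) :=
    hgel.eventually_lt_const hs1
  have hbound : ∀ᶠ n : ℕ in atTop, ‖Tc ^ n‖ ≤ (s : ℝ) ^ n := by
    filter_upwards [hev, eventually_ge_atTop 1] with n hn hn1
    have hne : (n : ℝ) ≠ 0 := by positivity
    have h1 : (‖Tc ^ n‖₊ : ENNReal) ≤ (s : ENNReal) ^ (n : ℝ) := by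
      calc (‖Tc ^ n‖₊ : ENNReal) = ((‖Tc ^ n‖₊ : ENNReal) ^ (1 / (n : ℝ))) ^ (n : ℝ) := by
            rw [← ENNReal.rpow_mul, one_div_mul_cancel hne, ENNReal.rpow_one]
        _ ≤ (s : ENNReal) ^ (n : ℝ) := ENNReal.rpow_le_rpow hn.le (by positivity)
    rw [ENNReal.rpow_natCast, ← ENNReal.coe_pow] at h1
    have h2 : ‖Tc ^ n‖₊ ≤ s ^ n := ENNReal.coe_le_coe.mp h1
    calc ‖Tc ^ n‖ ≤ ((s ^ n : ℝ≥0) : ℝ) := h2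
      _ = (s : ℝ) ^ n := by push_cast; ring
  -- entrywise bound
  have hmap : ∀ n : ℕ, Tc ^ n = (T ^ n).map (algebraMap ℝ ℂ) := by
    intro n
    rw [hTc]
    exact (map_pow ((algebraMap ℝ ℂ).mapMatrix) T n).symm
  have hentry : ∀ᶠ n : ℕ in atTop, ‖(T ^ n) i j‖ ≤ (s : ℝ) ^ n := by
    filter_upwards [hbound] with n hn
    have h1 : ‖(Tc ^ n) i j‖₊ ≤ ‖Tc ^ n‖₊ := by
      rw [Matrix.linfty_opNNNorm_def]
      calc ‖(Tc ^ n) i j‖₊ ≤ ∑ k, ‖(Tc ^ n) i k‖₊ :=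
            Finset.single_le_sum (f := fun k => ‖(Tc ^ n) i k‖₊) (fun k _ => zero_le) (Finset.mem_univ j)
        _ ≤ _ := Finset.le_sup (f := fun i => ∑ k, ‖(Tc ^ n) i k‖₊) (Finset.mem_univ i)
    have h2 : ‖(Tc ^ n) i j‖ ≤ ‖Tc ^ n‖ := h1
    have h3 : (Tc ^ n) i j = ((T ^ n) i j : ℂ) := by rw [hmap n]; rfl
    rw [h3, Complex.norm_real] at h2
    exact h2.trans hn
  exact squeeze_zero_norm' hentry
    (tendsto_pow_atTop_nhds_zero_of_lt_one s.coe_nonneg hs1')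

theorem lspia_converges_to_least_squares (S N : ℕ)
    (A : Matrix (Fin S) (Fin N) ℝ) (X : Fin S → ℝ) (C0 : Fin N → ℝ)
    (hrank : IsUnit (Aᵀ * A))
    (D : Matrix (Fin N) (Fin N) ℝ)
    (hD : D = Matrix.diagonal (fun j => ∑ s, A s j))
    (hDpos : ∀ j, 0 < ∑ s, A s j)
    (heig : ∀ μ : ℂ,
      Module.End.HasEigenvalue
        (Matrix.toLin' ((D⁻¹ * Aᵀ * A).map (algebraMap ℝ ℂ))) μ →
      μ.im = 0 ∧ 0 < μ.re ∧ μ.re ≤ 1)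
    (Cseq : ℕ → (Fin N → ℝ))
    (hinit : Cseq 0 = C0)
    (hstep : ∀ q : ℕ,
      Cseq (q + 1) = Cseq q + (D⁻¹ * Aᵀ).mulVec (X - A.mulVec (Cseq q))) :
    ∃ Cstar : Fin N → ℝ,
      Filter.Tendsto Cseq Filter.atTop (nhds Cstar) ∧
      (Aᵀ * A).mulVec Cstar = Aᵀ.mulVec X := by
  classical
  obtain ⟨M, hM⟩ : ∃ M' : Matrix (Fin N) (Fin N) ℝ, M' = D⁻¹ * Aᵀ * A := ⟨_, rfl⟩
  obtain ⟨B, hB⟩ : ∃ B' : Matrix (Fin N) (Fin N) ℝ, B' = 1 - M := ⟨_, rfl⟩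
  obtain ⟨Cstar, hCstar⟩ :
      ∃ C' : Fin N → ℝ, C' = (Aᵀ * A)⁻¹.mulVec (Aᵀ.mulVec X) := ⟨_, rfl⟩
  have hdet : IsUnit (Aᵀ * A).det := (Matrix.isUnit_iff_isUnit_det _).mp hrank
  have hnormal : (Aᵀ * A).mulVec Cstar = Aᵀ.mulVec X := by
    rw [hCstar, Matrix.mulVec_mulVec, Matrix.mul_nonsing_inv _ hdet, Matrix.one_mulVec]
  refine ⟨Cstar, ?_, hnormal⟩
  -- fixed point identity
  have hfix : (D⁻¹ * Aᵀ).mulVec X = M.mulVec Cstar := by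
    have hM' : M = D⁻¹ * (Aᵀ * A) := by rw [hM, Matrix.mul_assoc]
    rw [hM',
      show (D⁻¹ * (Aᵀ * A)).mulVec Cstar = D⁻¹.mulVec ((Aᵀ * A).mulVec Cstar) from
        (Matrix.mulVec_mulVec _ _ _).symm,
      hnormal, Matrix.mulVec_mulVec]
  have key : ∀ u : Fin N → ℝ, u - M.mulVec u = B.mulVec u := by
    intro u
    rw [hB, Matrix.sub_mulVec, Matrix.one_mulVec]
  -- closed form for the iterates
  have herr : ∀ q, Cseq q = Cstar + (B ^ q).mulVec (C0 - Cstar) := by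
    intro q
    induction q with
    | zero => simp [hinit, Matrix.one_mulVec]
    | succ q ih =>
      have hstep' : (D⁻¹ * Aᵀ).mulVec (X - A.mulVec (Cseq q))
          = M.mulVec Cstar - M.mulVec (Cseq q) := by
        rw [Matrix.mulVec_sub, hfix, Matrix.mulVec_mulVec, ← hM]
      rw [hstep q, hstep', ih]
      have hmulsub : M.mulVec (Cstar + (B ^ q).mulVec (C0 - Cstar))
          = M.mulVec Cstar + M.mulVec ((B ^ q).mulVec (C0 - Cstar)) :=
        Matrix.mulVec_add M _ _
      rw [hmulsub]
      have habel : Cstar + (B ^ q).mulVec (C0 - Cstar) +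
          (M.mulVec Cstar - (M.mulVec Cstar + M.mulVec ((B ^ q).mulVec (C0 - Cstar))))
          = Cstar + ((B ^ q).mulVec (C0 - Cstar) - M.mulVec ((B ^ q).mulVec (C0 - Cstar))) := by
        abel
      rw [habel, key, Matrix.mulVec_mulVec, ← pow_succ']
  -- spectrum of B lies in the open unit disc
  have hspec : ∀ z ∈ spectrum ℂ (B.map (algebraMap ℝ ℂ)), ‖z‖₊ < 1 := by
    intro z hz
    have hBmap : B.map (algebraMap ℝ ℂ) = 1 - M.map (algebraMap ℝ ℂ) := by
      have h0 : B.map (algebraMap ℝ ℂ) = (algebraMap ℝ ℂ).mapMatrix B := rfl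
      rw [h0, hB, _root_.map_sub, _root_.map_one]
      rfl
    rw [hBmap] at hz
    have h1 : (1 : Matrix (Fin N) (Fin N) ℂ) - M.map (algebraMap ℝ ℂ)
        = algebraMap ℂ (Matrix (Fin N) (Fin N) ℂ) (1 : ℂ) - M.map (algebraMap ℝ ℂ) := by
      rw [_root_.map_one]
    rw [h1, ← spectrum.singleton_sub_eq] at hz
    obtain ⟨x, hx, w, hw, hzw⟩ := Set.mem_sub.mp hz
    rw [Set.mem_singleton_iff] at hx
    subst hx
    have hw' : w ∈ spectrum ℂ (Matrix.toLin' (M.map (algebraMap ℝ ℂ))) := by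
      have hEnd : (Matrix.toLinAlgEquiv' (M.map (algebraMap ℝ ℂ)) :
          Module.End ℂ (Fin N → ℂ)) = Matrix.toLin' (M.map (algebraMap ℝ ℂ)) := rfl
      rw [← hEnd, AlgEquiv.spectrum_eq Matrix.toLinAlgEquiv']
      exact hw
    rw [hM] at hw'
    obtain ⟨him, hpos, hle⟩ := heig w (Module.End.hasEigenvalue_iff_mem_spectrum.mpr hw')
    have hzre : z = (((1 : ℝ) - w.re : ℝ) : ℂ) := by
      rw [← hzw]
      apply Complex.ext <;> simp [him]
    have hlt : ‖z‖ < 1 := by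
      rw [hzre, Complex.norm_real, Real.norm_eq_abs, abs_of_nonneg (by linarith)]
      linarith
    exact_mod_cast hlt
  have hent := fun i j => lspia_aux_entry_tendsto B hspec i j
  -- conclude convergence
  have hconv : Filter.Tendsto (fun q => Cstar + (B ^ q).mulVec (C0 - Cstar))
      Filter.atTop (nhds Cstar) := by
    rw [tendsto_pi_nhds]
    intro j
    have hsum : Filter.Tendsto (fun q => ∑ k, (B ^ q) j k * (C0 - Cstar) k)
        Filter.atTop (nhds 0) := by
      have h := tendsto_finset_sum Finset.univ
        (fun (k : Fin N) (_ : k ∈ Finset.univ) => (hent j k).mul_const ((C0 - Cstar) k))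
      simpa using h
    have h2 : Filter.Tendsto (fun q => Cstar j + ∑ k, (B ^ q) j k * (C0 - Cstar) k)
        Filter.atTop (nhds (Cstar j + 0)) := Filter.Tendsto.const_add _ hsum
    simpa [Matrix.mulVec, dotProduct] using h2
  exact hconv.congr (fun q => (herr q).symm)
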